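/- Let S and T be positive definite symmetric n×n matrices with S ⪯ T, let m ∈ ℝ^n, and let η > 0. Define Ψ_S(m) = η tr(√(mm^T + S)) and Ψ_T(m) = η tr(√(mm^T + T)). Then 0 ≤ Ψ_T(m) − Ψ_S(m) ≤ η (tr(√T) − tr(√S)). -/

import Mathlib

open Matrix
open scoped Classical

/-- The positive semidefinite square root of a matrix (zero if not PSD). -/
noncomputable def sqrtM {n : ℕ} (A : Matrix (Fin n) (Fin n) ℝ) : Matrix (Fin n) (Fin n) ℝ :=
  if h : A.PosSemidef then
    (h.1.eigenvectorUnitary : Matrix (Fin n) (Fin n) ℝ) * diagonal (Real.sqrt ∘ h.1.eigenvalues) *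
      (star h.1.eigenvectorUnitary : Matrix (Fin n) (Fin n) ℝ) else 0

/-- Euclidean norm of a vector. -/
noncomputable def euclNorm {n : ℕ} (v : Fin n → ℝ) : ℝ := Real.sqrt (v ⬝ᵥ v)

/-- The ℓ₂ operator (spectral) norm of a matrix. -/
noncomputable def opNorm {n : ℕ} (A : Matrix (Fin n) (Fin n) ℝ) : ℝ :=
  ⨆ u : {u : Fin n → ℝ // euclNorm u ≤ 1}, euclNorm (A *ᵥ u)

variable {n : ℕ} {A B X Y : Matrix (Fin n) (Fin n) ℝ}

lemma sqrtM_eq (h : A.PosSemidef) : sqrtM A =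
    (h.1.eigenvectorUnitary : Matrix (Fin n) (Fin n) ℝ) * diagonal (Real.sqrt ∘ h.1.eigenvalues) *
      (star h.1.eigenvectorUnitary : Matrix (Fin n) (Fin n) ℝ) := dif_pos h

lemma sqrtM_posSemidef (h : A.PosSemidef) : (sqrtM A).PosSemidef := by
  rw [sqrtM_eq h]
  have hD : (diagonal (Real.sqrt ∘ h.1.eigenvalues)).PosSemidef :=
    PosSemidef.diagonal fun i => Real.sqrt_nonneg _
  have := hD.mul_mul_conjTranspose_same (h.1.eigenvectorUnitary : Matrix (Fin n) (Fin n) ℝ)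
  rwa [Matrix.star_eq_conjTranspose]

lemma sqrtM_mul_self (h : A.PosSemidef) : sqrtM A * sqrtM A = A := by
  rw [sqrtM_eq h]
  have hU : (star h.1.eigenvectorUnitary : Matrix (Fin n) (Fin n) ℝ) *
      (h.1.eigenvectorUnitary : Matrix (Fin n) (Fin n) ℝ) = 1 := Unitary.coe_star_mul_self _
  have hD : diagonal (Real.sqrt ∘ h.1.eigenvalues) * diagonal (Real.sqrt ∘ h.1.eigenvalues)
      = diagonal h.1.eigenvalues := by
    rw [diagonal_mul_diagonal]; congr 1; ext i
    simp [Real.mul_self_sqrt (h.eigenvalues_nonneg i)]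
  conv_rhs => rw [h.1.spectral_theorem]
  rw [Unitary.conjStarAlgAut_apply]
  calc _ = (h.1.eigenvectorUnitary : Matrix (Fin n) (Fin n) ℝ) *
        (diagonal (Real.sqrt ∘ h.1.eigenvalues) * ((star h.1.eigenvectorUnitary : Matrix (Fin n) (Fin n) ℝ) *
          (h.1.eigenvectorUnitary : Matrix (Fin n) (Fin n) ℝ)) * diagonal (Real.sqrt ∘ h.1.eigenvalues)) *
        (star h.1.eigenvectorUnitary : Matrix (Fin n) (Fin n) ℝ) := by simp only [Matrix.mul_assoc]
    _ = _ := by rw [hU, Matrix.mul_one, hD]; simp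

lemma sqrtM_isHermitian (h : A.PosSemidef) : (sqrtM A).IsHermitian :=
  (sqrtM_posSemidef h).isHermitian

lemma posDef_of_det_ne_zero (h : A.PosSemidef) (hdet : A.det ≠ 0) : A.PosDef := by
  refine PosDef.of_dotProduct_mulVec_pos h.isHermitian fun x hx => ?_
  rcases lt_or_eq_of_le (h.dotProduct_mulVec_nonneg x) with h' | h'
  · exact h'
  exfalso
  apply hx
  have h0 : A *ᵥ x = 0 := (h.dotProduct_mulVec_zero_iff x).mp h'.symm
  have := congrArg (fun v => A⁻¹ *ᵥ v) h0
  simpa [mulVec_mulVec, nonsing_inv_mul A (isUnit_iff_ne_zero.mpr hdet), mulVec_zero] using this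

/-- sqrt of a positive definite matrix is positive definite. -/
lemma sqrtM_posDef (h : A.PosDef) : (sqrtM A).PosDef := by
  have hs := sqrtM_posSemidef h.posSemidef
  refine posDef_of_det_ne_zero hs fun h0 => ?_
  have : (sqrtM A).det * (sqrtM A).det = A.det := by
    rw [← det_mul, sqrtM_mul_self h.posSemidef]
  rw [h0, mul_zero] at this
  exact h.det_pos.ne' this.symm

/-- trace of PSD matrix is nonneg -/
lemma trace_nonneg_of_posSemidef (h : A.PosSemidef) : 0 ≤ A.trace := by
  rw [Matrix.trace]
  refine Finset.sum_nonneg fun i _ => ?_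
  exact h.diag_nonneg

/-- trace of product of two PSD matrices is nonneg -/
lemma trace_mul_nonneg (hA : A.PosSemidef) (hB : B.PosSemidef) : 0 ≤ (A * B).trace := by
  have herm : (sqrtM B)ᴴ = sqrtM B := (sqrtM_isHermitian hB).eq
  have hpsd : ((sqrtM B)ᴴ * A * sqrtM B).PosSemidef := hA.conjTranspose_mul_mul_same _
  have := trace_nonneg_of_posSemidef hpsd
  rw [herm, Matrix.trace_mul_cycle, sqrtM_mul_self hB, Matrix.trace_mul_comm] at this
  exact this

lemma posSemidef_smul (h : A.PosSemidef) {c : ℝ} (hc : 0 ≤ c) : (c • A).PosSemidef := by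
  refine PosSemidef.of_dotProduct_mulVec_nonneg ?_ fun x => ?_
  · rw [Matrix.IsHermitian, conjTranspose_smul, star_trivial, h.1.eq]
  · rw [smul_mulVec, dotProduct_smul]
    exact smul_nonneg hc (h.dotProduct_mulVec_nonneg x)

/-- Tangent-line inequality: tr √Y ≤ (tr((√X)⁻¹ Y) + tr √X)/2 for X PD, Y PSD. -/
lemma tangent_ineq (hX : X.PosDef) (hY : Y.PosSemidef) :
    (sqrtM Y).trace ≤ (((sqrtM X)⁻¹ * Y).trace + (sqrtM X).trace) / 2 := by
  set P := sqrtM Y with hP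
  set Q := sqrtM X with hQ
  have hQpd : Q.PosDef := sqrtM_posDef hX
  have hQdet : IsUnit Q.det := isUnit_iff_ne_zero.mpr hQpd.det_pos.ne'
  have hQl : Q⁻¹ * Q = 1 := nonsing_inv_mul Q hQdet
  have hQr : Q * Q⁻¹ = 1 := mul_nonsing_inv Q hQdet
  have hQinv : (Q⁻¹).PosDef := hQpd.inv
  have hHerm : (P - Q)ᴴ = P - Q := by
    rw [conjTranspose_sub, (sqrtM_isHermitian hY).eq, (sqrtM_isHermitian hX.posSemidef).eq]
  have hpsd : ((P - Q)ᴴ * Q⁻¹ * (P - Q)).PosSemidef :=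
    hQinv.posSemidef.conjTranspose_mul_mul_same _
  rw [hHerm] at hpsd
  have hQP : Q * (Q⁻¹ * P) = P := by rw [← Matrix.mul_assoc, hQr, Matrix.one_mul]
  have expand : (P - Q) * Q⁻¹ * (P - Q) = P * (Q⁻¹ * P) - P - P + Q := by
    rw [Matrix.mul_assoc, Matrix.mul_sub, Matrix.sub_mul, Matrix.mul_sub, Matrix.mul_sub,
      hQP, hQl]
    simp only [Matrix.mul_one]
    abel
  have htr := trace_nonneg_of_posSemidef hpsd
  rw [expand] at htr
  have hPP : P * P = Y := sqrtM_mul_self hY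
  have htrP : (P * (Q⁻¹ * P)).trace = (Q⁻¹ * Y).trace := by
    rw [Matrix.trace_mul_comm, Matrix.mul_assoc, hPP]
  rw [Matrix.trace_add, Matrix.trace_sub, Matrix.trace_sub, htrP] at htr
  linarith

lemma herm_transpose_eq {M : Matrix (Fin n) (Fin n) ℝ} (hM : M.IsHermitian) : Mᵀ = M := by
  ext i j
  have := congrFun (congrFun hM.eq i) j
  simpa [Matrix.conjTranspose_apply] using this

lemma symm_dot {M : Matrix (Fin n) (Fin n) ℝ} (hM : M.IsHermitian) (x y : Fin n → ℝ) :
    x ⬝ᵥ (M *ᵥ y) = (M *ᵥ x) ⬝ᵥ y := by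
  rw [dotProduct_mulVec, ← Matrix.mulVec_transpose, herm_transpose_eq hM]

lemma psd_dot {M : Matrix (Fin n) (Fin n) ℝ} (hM : M.PosSemidef) (x : Fin n → ℝ) :
    0 ≤ x ⬝ᵥ (M *ᵥ x) := by simpa using hM.dotProduct_mulVec_nonneg x

/-- Cauchy–Schwarz for dotProduct over ℝ. -/
lemma dot_sq_le (x y : Fin n → ℝ) : (x ⬝ᵥ y) ^ 2 ≤ (x ⬝ᵥ x) * (y ⬝ᵥ y) := by
  simpa [dotProduct, ← sq] using Finset.sum_mul_sq_le_sq_mul_sq Finset.univ x y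

/-- Inverse is antitone on positive definite matrices. -/
lemma inv_antitone (hA : A.PosDef) (hB : B.PosDef) (hAB : (B - A).PosSemidef) :
    (A⁻¹ - B⁻¹).PosSemidef := by
  have hAi : (A⁻¹).PosDef := hA.inv
  have hBi : (B⁻¹).PosDef := hB.inv
  refine PosSemidef.of_dotProduct_mulVec_nonneg (hAi.isHermitian.sub hBi.isHermitian) fun v => ?_
  rw [star_trivial, Matrix.sub_mulVec, dotProduct_sub, sub_nonneg]
  set C := sqrtM A with hC
  have hCpd : C.PosDef := sqrtM_posDef hA
  have hCdet : IsUnit C.det := isUnit_iff_ne_zero.mpr hCpd.det_pos.ne'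
  have hCherm := sqrtM_isHermitian hA.posSemidef
  have hCiherm : (C⁻¹).IsHermitian := hCpd.inv.isHermitian
  set w := B⁻¹ *ᵥ v with hw
  set t := v ⬝ᵥ (B⁻¹ *ᵥ v) with ht
  have ht0 : 0 ≤ t := psd_dot hBi.posSemidef v
  have hCC : C⁻¹ * C⁻¹ = A⁻¹ := by rw [← Matrix.mul_inv_rev, sqrtM_mul_self hA.posSemidef]
  have key1 : t = (C⁻¹ *ᵥ v) ⬝ᵥ (C *ᵥ w) := by
    rw [← symm_dot hCiherm, Matrix.mulVec_mulVec, nonsing_inv_mul C hCdet, Matrix.one_mulVec]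
  have key2 : (C⁻¹ *ᵥ v) ⬝ᵥ (C⁻¹ *ᵥ v) = v ⬝ᵥ (A⁻¹ *ᵥ v) := by
    rw [← symm_dot hCiherm v (C⁻¹ *ᵥ v), Matrix.mulVec_mulVec, hCC]
  have key3 : (C *ᵥ w) ⬝ᵥ (C *ᵥ w) = w ⬝ᵥ (A *ᵥ w) := by
    rw [← symm_dot hCherm w (C *ᵥ w), Matrix.mulVec_mulVec, sqrtM_mul_self hA.posSemidef]
  have key4 : w ⬝ᵥ (A *ᵥ w) ≤ w ⬝ᵥ (B *ᵥ w) := by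
    have := psd_dot hAB w
    rw [Matrix.sub_mulVec, dotProduct_sub, sub_nonneg] at this
    exact this
  have key5 : w ⬝ᵥ (B *ᵥ w) = t := by
    rw [hw, Matrix.mulVec_mulVec, mul_nonsing_inv B (isUnit_iff_ne_zero.mpr hB.det_pos.ne'),
      Matrix.one_mulVec, ht, dotProduct_comm]
  have hCS := dot_sq_le (C⁻¹ *ᵥ v) (C *ᵥ w)
  rw [← key1, key2, key3] at hCS
  set a := v ⬝ᵥ (A⁻¹ *ᵥ v) with ha
  have ha0 : 0 ≤ a := psd_dot hAi.posSemidef v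
  have hts : t ^ 2 ≤ a * t := le_trans hCS (by
    have := mul_le_mul_of_nonneg_left (le_trans key4 (le_of_eq key5)) ha0
    exact this)
  rcases ht0.eq_or_lt with h0 | hpos
  · rw [← h0]; exact ha0
  · have : t * t ≤ a * t := by nlinarith
    exact le_of_mul_le_mul_right this hpos

/-- Operator monotonicity of the matrix square root. -/
lemma sqrtM_monotone (hA : A.PosSemidef) (hB : B.PosDef) (hAB : (B - A).PosSemidef) :
    (sqrtM B - sqrtM A).PosSemidef := by
  set P := sqrtM A with hPdef
  set Q := sqrtM B with hQdef
  have hPh := sqrtM_isHermitian hA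
  have hQh := sqrtM_isHermitian hB.posSemidef
  have hQpd : Q.PosDef := sqrtM_posDef hB
  have hH : (Q - P).IsHermitian := hQh.sub hPh
  refine hH.posSemidef_iff_eigenvalues_nonneg.mpr (Pi.le_def.mpr fun i => ?_)
  show 0 ≤ hH.eigenvalues i
  set μ := hH.eigenvalues i with hμ
  set v : Fin n → ℝ := ⇑(hH.eigenvectorBasis i) with hv
  have hvec : (Q - P) *ᵥ v = μ • v := hH.mulVec_eigenvectorBasis i
  have hvne : v ≠ 0 := by
    intro h
    apply hH.eigenvectorBasis.orthonormal.ne_zero i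
    ext j
    exact congrFun h j
  have hdecomp : B - A = Q * (Q - P) + (Q - P) * P := by
    rw [Matrix.mul_sub, Matrix.sub_mul, sqrtM_mul_self hB.posSemidef, sqrtM_mul_self hA]
    abel
  have h0 : 0 ≤ v ⬝ᵥ ((B - A) *ᵥ v) := psd_dot hAB v
  rw [hdecomp, Matrix.add_mulVec, dotProduct_add, ← Matrix.mulVec_mulVec, hvec,
    Matrix.mulVec_smul, dotProduct_smul, ← Matrix.mulVec_mulVec, symm_dot hH, hvec,
    smul_dotProduct] at h0
  have hsum : 0 ≤ μ * (v ⬝ᵥ (Q *ᵥ v) + v ⬝ᵥ (P *ᵥ v)) := by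
    rw [mul_add]; simpa [smul_eq_mul] using h0
  have hqpos : 0 < v ⬝ᵥ (Q *ᵥ v) := by simpa using hQpd.dotProduct_mulVec_pos hvne
  have hppos : 0 ≤ v ⬝ᵥ (P *ᵥ v) := psd_dot (sqrtM_posSemidef hA) v
  nlinarith

/-- Löwner–Heinz-type comparison in trace form. -/
lemma trace_invsqrt_mul_antitone {D : Matrix (Fin n) (Fin n) ℝ}
    (hA : A.PosDef) (hB : B.PosDef) (hAB : (B - A).PosSemidef) (hD : D.PosSemidef) :
    ((sqrtM B)⁻¹ * D).trace ≤ ((sqrtM A)⁻¹ * D).trace := by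
  have h1 : (A⁻¹ - B⁻¹).PosSemidef := inv_antitone hA hB hAB
  have h2 : ((sqrtM A)⁻¹ - (sqrtM B)⁻¹).PosSemidef :=
    inv_antitone (sqrtM_posDef hA) (sqrtM_posDef hB) (sqrtM_monotone hA.posSemidef hB hAB)
  have h3 := trace_mul_nonneg h2 hD
  rw [Matrix.sub_mul, Matrix.trace_sub, sub_nonneg] at h3
  exact h3

/-- Monotonicity of trace of sqrt. -/
lemma trace_sqrtM_mono (hA : A.PosSemidef) (hB : B.PosDef) (hAB : (B - A).PosSemidef) :
    (sqrtM A).trace ≤ (sqrtM B).trace := by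
  have K := tangent_ineq hB hA
  have h1 : ((sqrtM B)⁻¹ * A).trace ≤ ((sqrtM B)⁻¹ * B).trace := by
    have := trace_mul_nonneg ((sqrtM_posDef hB).inv.posSemidef) hAB
    rw [Matrix.mul_sub, Matrix.trace_sub, sub_nonneg] at this
    exact this
  have h2 : (sqrtM B)⁻¹ * B = sqrtM B := by
    calc (sqrtM B)⁻¹ * B = (sqrtM B)⁻¹ * (sqrtM B * sqrtM B) := by
          rw [sqrtM_mul_self hB.posSemidef]
      _ = sqrtM B := by
          rw [← Matrix.mul_assoc,
            nonsing_inv_mul _ (isUnit_iff_ne_zero.mpr (sqrtM_posDef hB).det_pos.ne'),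
            Matrix.one_mul]
  rw [h2] at h1
  linarith

lemma invsqrt_mul_self (hX : X.PosDef) : (sqrtM X)⁻¹ * X = sqrtM X := by
  calc (sqrtM X)⁻¹ * X = (sqrtM X)⁻¹ * (sqrtM X * sqrtM X) := by
        rw [sqrtM_mul_self hX.posSemidef]
    _ = sqrtM X := by
        rw [← Matrix.mul_assoc,
          nonsing_inv_mul _ (isUnit_iff_ne_zero.mpr (sqrtM_posDef hX).det_pos.ne'),
          Matrix.one_mul]

lemma step_upper {E : Matrix (Fin n) (Fin n) ℝ} (hX : X.PosDef) (hE : E.PosSemidef) :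
    (sqrtM (X + E)).trace ≤ (sqrtM X).trace + ((sqrtM X)⁻¹ * E).trace / 2 := by
  have K := tangent_ineq hX (hX.posSemidef.add hE)
  rw [Matrix.mul_add, Matrix.trace_add, invsqrt_mul_self hX] at K
  linarith

lemma step_lower {E : Matrix (Fin n) (Fin n) ℝ} (hX : X.PosDef) (hE : E.PosSemidef) :
    (sqrtM X).trace + ((sqrtM (X + E))⁻¹ * E).trace / 2 ≤ (sqrtM (X + E)).trace := by
  have hXE : (X + E).PosDef := hX.add_posSemidef hE
  have K := tangent_ineq hXE hX.posSemidef
  have h1 : ((sqrtM (X + E))⁻¹ * X).trace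
      = (sqrtM (X + E)).trace - ((sqrtM (X + E))⁻¹ * E).trace := by
    have e1 : (sqrtM (X + E))⁻¹ * X = (sqrtM (X + E))⁻¹ * (X + E) - (sqrtM (X + E))⁻¹ * E := by
      rw [Matrix.mul_add]; abel
    rw [e1, Matrix.trace_sub, invsqrt_mul_self hXE]
  rw [h1] at K
  linarith

lemma vecMulVec_posSemidef (m : Fin n → ℝ) : (vecMulVec m m).PosSemidef := by
  refine PosSemidef.of_dotProduct_mulVec_nonneg ?_ fun x => ?_
  · ext i j
    simp [Matrix.conjTranspose_apply, Matrix.vecMulVec_apply, mul_comm]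
  ·
    have hmv : vecMulVec m m *ᵥ x = (m ⬝ᵥ x) • m := by
      ext i
      simp only [Matrix.mulVec, Matrix.vecMulVec_apply, dotProduct, Pi.smul_apply, smul_eq_mul,
        Finset.sum_mul]
      exact Finset.sum_congr rfl fun j _ => by ring
    rw [star_trivial, hmv, dotProduct_smul, smul_eq_mul, dotProduct_comm]
    exact mul_self_nonneg _

lemma discretize {S T M₀ : Matrix (Fin n) (Fin n) ℝ}
    (hS : S.PosDef) (hT : T.PosDef) (hST : (T - S).PosSemidef)
    (hM₀ : M₀.PosSemidef) {k : ℕ} (hk : 0 < k) :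
    (sqrtM (M₀ + T)).trace - (sqrtM (M₀ + S)).trace
      ≤ (sqrtM T).trace - (sqrtM S).trace
        + (((sqrtM S)⁻¹ * (T - S)).trace - ((sqrtM T)⁻¹ * (T - S)).trace) / (2 * k) := by
  have hk0 : (0 : ℝ) < (k : ℝ) := Nat.cast_pos.mpr hk
  set D := T - S with hD
  set A : ℕ → Matrix (Fin n) (Fin n) ℝ := fun i => S + ((i : ℝ) / (k : ℝ)) • D with hA
  have hA0 : A 0 = S := by simp [hA]
  have hAk : A k = T := by
    simp only [hA]
    rw [div_self hk0.ne', one_smul, hD]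
    abel
  have hApd : ∀ i : ℕ, (A i).PosDef := fun i =>
    hS.add_posSemidef (posSemidef_smul hST (by positivity))
  have hBpd : ∀ i : ℕ, (M₀ + A i).PosDef := fun i => Matrix.PosDef.posSemidef_add hM₀ (hApd i)
  have hstep : ∀ i : ℕ, A (i + 1) = A i + ((1 : ℝ) / (k : ℝ)) • D := by
    intro i
    simp only [hA]
    rw [add_assoc, ← add_smul]
    congr 1
    push_cast
    ring
  have hEpsd : (((1 : ℝ) / (k : ℝ)) • D).PosSemidef := posSemidef_smul hST (by positivity)
  set c : ℕ → ℝ := fun i => ((sqrtM (A i))⁻¹ * D).trace with hc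
  have hupper : ∀ i : ℕ,
      (sqrtM (M₀ + A (i + 1))).trace - (sqrtM (M₀ + A i)).trace ≤ c i / (2 * k) := by
    intro i
    have e1 : M₀ + A (i + 1) = (M₀ + A i) + ((1 : ℝ) / (k : ℝ)) • D := by
      rw [hstep i]; exact (add_assoc _ _ _).symm
    have h1 := step_upper (hBpd i) hEpsd
    have h2 : ((sqrtM (M₀ + A i))⁻¹ * (((1 : ℝ) / (k : ℝ)) • D)).trace
        = ((sqrtM (M₀ + A i))⁻¹ * D).trace / k := by
      rw [Matrix.mul_smul, Matrix.trace_smul, smul_eq_mul]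
      ring
    have h3 : ((sqrtM (M₀ + A i))⁻¹ * D).trace ≤ c i := by
      refine trace_invsqrt_mul_antitone (hApd i) (hBpd i) ?_ hST
      simpa using hM₀
    rw [e1]
    have h3' : ((sqrtM (M₀ + A i))⁻¹ * D).trace / (k : ℝ) ≤ c i / (k : ℝ) := by gcongr
    have e2 : c i / (2 * k) = (c i / k) / 2 := by ring
    linarith
  have hlower : ∀ i : ℕ,
      c (i + 1) / (2 * k) ≤ (sqrtM (A (i + 1))).trace - (sqrtM (A i)).trace := by
    intro i
    have h1 := step_lower (hApd i) hEpsd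
    rw [← hstep i] at h1
    have h2 : ((sqrtM (A (i + 1)))⁻¹ * (((1 : ℝ) / (k : ℝ)) • D)).trace
        = c (i + 1) / k := by
      rw [Matrix.mul_smul, Matrix.trace_smul, smul_eq_mul]
      ring
    rw [hstep i, ← hstep i] at h1
    have e2 : c (i + 1) / (2 * k) = (c (i + 1) / k) / 2 := by ring
    linarith [h1, h2]
  have hfsum : (sqrtM (M₀ + A k)).trace - (sqrtM (M₀ + A 0)).trace
      ≤ (∑ i ∈ Finset.range k, c i) / (2 * k) := by
    rw [← Finset.sum_range_sub (fun i => (sqrtM (M₀ + A i)).trace) k, Finset.sum_div]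
    exact Finset.sum_le_sum fun i _ => hupper i
  have hgsum : (∑ i ∈ Finset.range k, c (i + 1)) / (2 * k)
      ≤ (sqrtM (A k)).trace - (sqrtM (A 0)).trace := by
    rw [← Finset.sum_range_sub (fun i => (sqrtM (A i)).trace) k, Finset.sum_div]
    exact Finset.sum_le_sum fun i _ => hlower i
  have hshift : ∑ i ∈ Finset.range k, c (i + 1)
      = ∑ i ∈ Finset.range k, c i + c k - c 0 := by
    have e1 := Finset.sum_range_succ' c k
    have e2 := Finset.sum_range_succ c k
    linarith
  rw [hA0, hAk] at hfsum hgsum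
  have hc0 : c 0 = ((sqrtM S)⁻¹ * (T - S)).trace := by rw [hc]; simp only; rw [hA0, hD]
  have hck : c k = ((sqrtM T)⁻¹ * (T - S)).trace := by rw [hc]; simp only; rw [hAk, hD]
  rw [← hc0, ← hck]
  have e3 : (∑ i ∈ Finset.range k, c i + c k - c 0) / (2 * k)
      = (∑ i ∈ Finset.range k, c i) / (2 * k) + c k / (2 * k) - c 0 / (2 * k) := by ring
  have e4 : (c 0 - c k) / (2 * k) = c 0 / (2 * k) - c k / (2 * k) := by ring
  rw [hshift, e3] at hgsum
  linarith

theorem leon_upper_stability {n : ℕ} {S T : Matrix (Fin n) (Fin n) ℝ}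
    (hS : S.PosDef) (hT : T.PosDef) (hST : (T - S).PosSemidef)
    (m : Fin n → ℝ) {η : ℝ} (hη : 0 < η) :
    0 ≤ η * (sqrtM (vecMulVec m m + T)).trace - η * (sqrtM (vecMulVec m m + S)).trace ∧
    η * (sqrtM (vecMulVec m m + T)).trace - η * (sqrtM (vecMulVec m m + S)).trace
      ≤ η * ((sqrtM T).trace - (sqrtM S).trace) := by
  set M₀ := vecMulVec m m with hM₀def
  have hM₀ : M₀.PosSemidef := vecMulVec_posSemidef m
  have hMS : (M₀ + S).PosDef := Matrix.PosDef.posSemidef_add hM₀ hS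
  have hMT : (M₀ + T).PosDef := Matrix.PosDef.posSemidef_add hM₀ hT
  have hsub : ((M₀ + T) - (M₀ + S)).PosSemidef := by
    have e : (M₀ + T) - (M₀ + S) = T - S := by abel
    rw [e]; exact hST
  have key : (sqrtM (M₀ + T)).trace - (sqrtM (M₀ + S)).trace
      ≤ (sqrtM T).trace - (sqrtM S).trace := by
    set L := (sqrtM (M₀ + T)).trace - (sqrtM (M₀ + S)).trace with hL
    set R := (sqrtM T).trace - (sqrtM S).trace with hR
    set C := ((sqrtM S)⁻¹ * (T - S)).trace - ((sqrtM T)⁻¹ * (T - S)).trace with hC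
    by_contra hcon
    push_neg at hcon
    have hε : 0 < L - R := sub_pos.mpr hcon
    obtain ⟨k, hk⟩ := exists_nat_gt (max (C / (2 * (L - R))) 0)
    have hkpos : 0 < k := by
      have h0 : (0 : ℝ) < k := lt_of_le_of_lt (le_max_right _ 0) hk
      exact_mod_cast h0
    have hd := discretize hS hT hST hM₀ hkpos
    have h2k : (0 : ℝ) < 2 * k := by positivity
    have hCk : C / (2 * (L - R)) < k := lt_of_le_of_lt (le_max_left _ _) hk
    have h1 : C < (L - R) * (2 * k) := by
      have := (div_lt_iff₀ (by positivity : (0 : ℝ) < 2 * (L - R))).mp hCk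
      nlinarith
    have h2 : C / (2 * k) < L - R := (div_lt_iff₀ h2k).mpr (by linarith)
    rw [← hL, ← hR, ← hC] at hd
    linarith
  constructor
  · have h := trace_sqrtM_mono hMS.posSemidef hMT hsub
    nlinarith
  · nlinarith
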